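/- Suppose A(z), B(z), W_1(z) have real coefficients, and let c ∈ ℝ with B(c) ≠ 0. Then c is a common zero of (W_n) if and only if either (a) Δ(c) > 0, A(c) = 0, and W_n(c) = 0 exactly when n is odd, or (b) Δ(c) < 0 and Arg(u), Arg(v) ∈ ℚπ with p*(u) | p*(v). -/

import Mathlib

open Complex


lemma aux_sq (d : ℂ) (hd : d ≠ 0) : (d ^ ((1:ℂ)/2)) ^ 2 = d := by
  have h := (Complex.cpow_add (1/2) (1/2) hd).symm
  norm_num at h
  rw [sq, h]

lemma aux_key (z : ℂ) (m : ℕ) (hm : 0 < m) (hz : z ^ m = 1) :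
    ‖z‖ = 1 ∧ ∃ k : ℤ, (m:ℝ) * z.arg = 2 * Real.pi * k := by
  have habs : ‖z‖ = 1 := by
    have h1 : ‖z‖ ^ m = 1 := by
      rw [← norm_pow, hz, norm_one]
    have h0 : (0:ℝ) ≤ ‖z‖ := norm_nonneg z
    by_contra hne
    rcases lt_or_gt_of_ne hne with hlt | hgt
    · have := pow_lt_one₀ h0 hlt hm.ne'
      rw [h1] at this; exact lt_irrefl 1 this
    · have := one_lt_pow₀ hgt hm.ne'
      rw [h1] at this; exact lt_irrefl 1 this
  refine ⟨habs, ?_⟩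
  have hzexp : z = Complex.exp (z.arg * I) := by
    conv_lhs => rw [← Complex.norm_mul_exp_arg_mul_I z]
    rw [habs]; simp
  rw [hzexp, ← Complex.exp_nat_mul] at hz
  obtain ⟨k, hk⟩ := Complex.exp_eq_one_iff.mp hz
  refine ⟨k, ?_⟩
  have h2 : ((m : ℝ) * z.arg : ℂ) * I = ((2 * Real.pi * k : ℝ) : ℂ) * I := by
    push_cast
    push_cast at hk
    rw [show ((m:ℂ) * (↑z.arg * I)) = ((m:ℂ) * z.arg) * I by ring] at hk
    rw [hk]; ring
  have := mul_right_cancel₀ Complex.I_ne_zero h2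
  exact_mod_cast this

lemma aux_arg (z : ℂ) (m : ℕ) (hm : 0 < m) (hz : z ^ m = 1) :
    ∃ (p : ℕ) (q : ℤ), 0 < p ∧ Int.gcd (p:ℤ) q = 1 ∧ z.arg = 2*q*Real.pi/p ∧ p ∣ m := by
  obtain ⟨habs, k, hk⟩ := aux_key z m hm hz
  set g : ℕ := Int.gcd (m:ℤ) k with hg
  have hg0 : 0 < g := Int.gcd_pos_of_ne_zero_left k (by exact_mod_cast hm.ne')
  have hgm : (g:ℤ) ∣ (m:ℤ) := Int.gcd_dvd_left _ _
  have hgk : (g:ℤ) ∣ k := Int.gcd_dvd_right _ _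
  have hgmn : g ∣ m := by exact_mod_cast hgm
  have hp0 : 0 < m / g := Nat.div_pos (Nat.le_of_dvd hm hgmn) hg0
  have hmg : g * (m / g) = m := Nat.mul_div_cancel' hgmn
  have hkg : (g:ℤ) * (k / g) = k := Int.mul_ediv_cancel' hgk
  have hcast : ((m/g : ℕ) : ℤ) = (m:ℤ) / (g:ℤ) := by
    have hmgz : (g:ℤ) * ((m/g : ℕ):ℤ) = (m:ℤ) := by exact_mod_cast hmg
    rw [← hmgz, Int.mul_ediv_cancel_left _ (by exact_mod_cast hg0.ne' : (g:ℤ) ≠ 0)]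
  refine ⟨m / g, k / g, hp0, ?_, ?_, Nat.div_dvd_of_dvd hgmn⟩
  · have h1 : Int.gcd ((m:ℤ) / Int.gcd (m:ℤ) k) (k / Int.gcd (m:ℤ) k) = 1 :=
      Int.gcd_div_gcd_div_gcd (by exact_mod_cast hg0)
    rw [← hg] at h1
    rw [hcast]; exact h1
  · have hgr : (g:ℝ) ≠ 0 := by positivity
    have hpq : ((m / g : ℕ) : ℝ) ≠ 0 := by positivity
    have hmgr : (m:ℝ) = (g:ℝ) * ((m/g : ℕ) : ℝ) := by exact_mod_cast hmg.symm
    have hkgr : (k:ℝ) = (g:ℝ) * ((k/g : ℤ) : ℝ) := by exact_mod_cast hkg.symm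
    rw [hmgr, hkgr] at hk
    have h2 : ((m/g : ℕ):ℝ) * z.arg = 2 * Real.pi * ((k/g : ℤ):ℝ) :=
      mul_left_cancel₀ hgr (by linear_combination hk)
    rw [eq_div_iff hpq]
    linear_combination h2

lemma aux_pow_one (z : ℂ) (p : ℕ) (q : ℤ) (habs : ‖z‖ = 1) (hp : 0 < p)
    (harg : z.arg = 2*q*Real.pi/p) : z ^ p = 1 := by
  have hzexp : z = Complex.exp (z.arg * I) := by
    conv_lhs => rw [← Complex.norm_mul_exp_arg_mul_I z]
    rw [habs]; simp
  rw [hzexp, ← Complex.exp_nat_mul, harg]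
  rw [show ((p:ℂ) * (((2*q*Real.pi/p : ℝ) : ℂ) * I)) = q * (2 * Real.pi * I) by
    push_cast
    have hpne : (p:ℂ) ≠ 0 := by exact_mod_cast hp.ne'
    field_simp]
  exact Complex.exp_int_mul_two_pi_mul_I q

-- v primitive p-th root of unity generates all p-th roots
lemma aux_gen (v u : ℂ) (p : ℕ) (q : ℤ) (hp : 0 < p) (hgcd : Int.gcd (p:ℤ) q = 1)
    (hv : ‖v‖ = 1) (hargv : v.arg = 2*q*Real.pi/p)
    (hu : u ^ p = 1) : ∃ n : ℕ, v ^ n = u ∧ v ^ (n + p) = u := by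
  have hvp : v ^ p = 1 := aux_pow_one v p q hv hp hargv
  obtain ⟨habsu, k, hk⟩ := aux_key u p hp hu
  have hpr : (p:ℝ) ≠ 0 := by positivity
  have hargu : u.arg = 2 * Real.pi * k / p := by
    rw [eq_div_iff hpr]; linear_combination hk
  -- Bezout
  obtain ⟨x, y, hxy⟩ := Int.isCoprime_iff_gcd_eq_one.mpr hgcd
  -- t := k * y satisfies t*q = k - k*x*p
  set t : ℤ := k * y with ht
  have hv0 : v ≠ 0 := by
    intro h; rw [h] at hv; simp at hv
  have hvexp : v = Complex.exp (v.arg * I) := by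
    conv_lhs => rw [← Complex.norm_mul_exp_arg_mul_I v]
    rw [hv]; simp
  have huexp : u = Complex.exp (u.arg * I) := by
    conv_lhs => rw [← Complex.norm_mul_exp_arg_mul_I u]
    rw [habsu]; simp
  have hzt : v ^ t = u := by
    rw [hvexp, ← Complex.exp_int_mul, huexp]
    rw [Complex.exp_eq_exp_iff_exists_int]
    refine ⟨-(k*x), ?_⟩
    rw [hargv, hargu]
    have h1 : (x:ℂ) * p + y * q = 1 := by exact_mod_cast hxy
    have hpC : (p:ℂ) ≠ 0 := by exact_mod_cast hp.ne'
    push_cast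
    field_simp
    have htC : (t:ℂ) = (k:ℂ) * (y:ℂ) := by exact_mod_cast congrArg (Int.cast : ℤ → ℂ) ht
    linear_combination (k:ℂ) * h1 + (q:ℂ) * htC
  -- reduce t mod p to a natural number
  have hvpz : v ^ (p:ℤ) = 1 := by rw [zpow_natCast]; exact hvp
  have key : ∀ s : ℤ, v ^ (t + p * s) = u := by
    intro s
    rw [zpow_add₀ hv0, hzt, zpow_mul, hvpz, one_zpow, mul_one]
  set n : ℕ := (t % p).toNat with hn
  have hmod : (n : ℤ) = t % p := Int.toNat_of_nonneg (Int.emod_nonneg t (by exact_mod_cast hp.ne'))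
  have h1 : v ^ n = u := by
    have : v ^ ((n:ℤ)) = u := by
      rw [hmod, show t % p = t + p * (-(t / p)) by rw [Int.emod_def]; ring]
      exact key _
    rwa [zpow_natCast] at this
  exact ⟨n, h1, by rw [pow_add, h1, hvp, mul_one]⟩


lemma aux_binet {K : Type*} [Field K] (a b w1 x1 x2 α β : K) (w : ℕ → K)
    (h0 : w 0 = 1) (h1 : w 1 = w1)
    (hrec : ∀ n, 2 ≤ n → w n = a * w (n-1) + b * w (n-2))
    (hx1 : x1^2 = a*x1 + b) (hx2 : x2^2 = a*x2 + b)
    (hαβ : α + β = 1) (hαβ1 : α*x1 + β*x2 = w1) :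
    ∀ n, w n = α * x1^n + β * x2^n := by
  intro n
  induction n using Nat.strong_induction_on with
  | _ n ih =>
    match n with
    | 0 => simp only [pow_zero, mul_one, hαβ, h0]
    | 1 => simp only [pow_one, hαβ1, h1]
    | (n+2) =>
      rw [hrec (n+2) (by omega)]
      have e1 : n + 2 - 1 = n + 1 := rfl
      have e2 : n + 2 - 2 = n := rfl
      rw [e1, e2, ih (n+1) (by omega), ih n (by omega)]
      have f1 : x1^(n+2) = (a*x1+b) * x1^n := by rw [← hx1]; ring
      have f2 : x2^(n+2) = (a*x2+b) * x2^n := by rw [← hx2]; ring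
      rw [f1, f2]; ring


-- d = 0 : no two zeros
lemma aux_deg (a b : ℝ) (w : ℕ → ℝ) (hw0 : w 0 = 1)
    (hrec : ∀ n, 2 ≤ n → w n = a * w (n-1) + b * w (n-2))
    (hb : b ≠ 0) (hd : a^2 + 4*b = 0)
    (i j : ℕ) (hij : i ≠ j) (hi : w i = 0) (hj : w j = 0) : False := by
  set r : ℝ := a / 2 with hr
  have hb' : b = -r^2 := by rw [hr]; nlinarith
  have ha' : a = 2*r := by rw [hr]; ring
  have hr0 : r ≠ 0 := by
    intro h; rw [h] at hb'; norm_num at hb'; exact hb hb'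
  have key : ∀ n : ℕ, w n * r = r^(n+1) + n * (w 1 - r) * r^n := by
    intro n
    induction n using Nat.strong_induction_on with
    | _ n ih =>
      match n with
      | 0 => simp [hw0]
      | 1 => push_cast; ring
      | (n+2) =>
        have e := hrec (n+2) (by omega)
        have e1 : n + 2 - 1 = n + 1 := rfl
        have e2 : n + 2 - 2 = n := rfl
        rw [e1, e2] at e
        have h3 : w (n+2) * r = a * (w (n+1) * r) + b * (w n * r) := by rw [e]; ring
        rw [h3, ih (n+1) (by omega), ih n (by omega), ha', hb']
        push_cast
        ring
  have hkey : ∀ n : ℕ, w n = 0 → r + n * (w 1 - r) = 0 := by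
    intro n hn
    have h := key n
    rw [hn, zero_mul] at h
    have h2 : (r + n * (w 1 - r)) * r ^ n = 0 := by linear_combination -h
    rcases mul_eq_zero.mp h2 with h3 | h3
    · exact h3
    · exact absurd h3 (pow_ne_zero n hr0)
  have hki := hkey i hi
  have hkj := hkey j hj
  have hij' : (i:ℝ) ≠ (j:ℝ) := by exact_mod_cast hij
  have hw1r : w 1 - r = 0 := by
    by_contra h
    exact hij' (mul_right_cancel₀ h (show (i:ℝ)*(w 1 - r) = (j:ℝ)*(w 1 - r) by linarith))
  rw [hw1r, mul_zero, add_zero] at hki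
  exact hr0 hki

-- parity for a = 0
lemma aux_parity (b : ℝ) (w : ℕ → ℝ) (hw0 : w 0 = 1)
    (hstep : ∀ n : ℕ, w (n+2) = b * w n) :
    (∀ m, w (2*m) = b^m) ∧ (∀ m, w (2*m+1) = b^m * w 1) := by
  constructor
  · intro m
    induction m with
    | zero => simpa using hw0
    | succ m ih =>
      have : 2*(m+1) = 2*m + 2 := by ring
      rw [this, hstep, ih, pow_succ]; ring
  · intro m
    induction m with
    | zero => simp
    | succ m ih =>
      have : 2*(m+1)+1 = (2*m+1) + 2 := by ring
      rw [this, hstep, ih, pow_succ]; ring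

-- real pow cancellation
lemma aux_real_pow (x y : ℝ) (k : ℕ) (hk : 0 < k) (hx : x ≠ 0)
    (hxy : x ≠ y) (h : x ^ k = y ^ k) : x + y = 0 := by
  have habs : |x| = |y| := by
    have h1 : |x| ^ k = |y| ^ k := by rw [← _root_.abs_pow, ← _root_.abs_pow, h]
    by_contra hne
    rcases lt_or_gt_of_ne hne with hlt | hgt
    · have := pow_lt_pow_left₀ hlt (abs_nonneg x) hk.ne'
      rw [h1] at this; exact lt_irrefl _ this
    · have := pow_lt_pow_left₀ hgt (abs_nonneg y) hk.ne'
      rw [h1] at this; exact lt_irrefl _ this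
  rcases abs_eq_abs.mp habs with h2 | h2
  · exact absurd h2 hxy
  · rw [h2]; ring

lemma aux_neg (a b w1 : ℝ) (w : ℕ → ℝ) (hw0 : w 0 = 1) (hw1 : w 1 = w1)
    (hrec : ∀ n, 2 ≤ n → w n = a * w (n-1) + b * w (n-2))
    (hb : b ≠ 0) (hd : a^2 + 4*b < 0) :
    (∃ i j : ℕ, i ≠ j ∧ w i = 0 ∧ w j = 0) ↔
      (∃ (pu pv : ℕ) (qu qv : ℤ), 0 < pu ∧ 0 < pv ∧
        Int.gcd (pu:ℤ) qu = 1 ∧ Int.gcd (pv:ℤ) qv = 1 ∧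
        Complex.arg (((2 * Complex.ofReal w1 - Complex.ofReal a -
            (Complex.ofReal a ^ 2 + 4 * Complex.ofReal b) ^ ((1:ℂ)/2)) / 2) /
          ((2 * Complex.ofReal w1 - Complex.ofReal a +
            (Complex.ofReal a ^ 2 + 4 * Complex.ofReal b) ^ ((1:ℂ)/2)) / 2)) = 2 * qu * Real.pi / pu ∧
        Complex.arg ((Complex.ofReal a + (Complex.ofReal a ^ 2 + 4 * Complex.ofReal b) ^ ((1:ℂ)/2)) /
          (Complex.ofReal a - (Complex.ofReal a ^ 2 + 4 * Complex.ofReal b) ^ ((1:ℂ)/2))) = 2 * qv * Real.pi / pv ∧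
        pu ∣ pv) := by
  set s : ℂ := (Complex.ofReal a ^ 2 + 4 * Complex.ofReal b) ^ ((1:ℂ)/2) with hsdef
  set v : ℂ := (Complex.ofReal a + s) / (Complex.ofReal a - s) with hvdef
  set u : ℂ := ((2 * Complex.ofReal w1 - Complex.ofReal a - s) / 2) /
      ((2 * Complex.ofReal w1 - Complex.ofReal a + s) / 2) with hudef
  have hdC : (Complex.ofReal a ^ 2 + 4 * Complex.ofReal b) = ((a^2 + 4*b : ℝ) : ℂ) := by
    push_cast; ring
  have hdne : ((a^2+4*b:ℝ):ℂ) ≠ 0 := by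
    simp only [ne_eq, Complex.ofReal_eq_zero]
    intro h; linarith
  have hsq' : s^2 = Complex.ofReal a ^ 2 + 4 * Complex.ofReal b := by
    rw [hsdef, hdC]; exact aux_sq _ hdne
  have hsq'' : s^2 = ((a^2+4*b : ℝ):ℂ) := hsq'.trans hdC
  -- s is purely imaginary
  have hsre : s.re = 0 ∧ s.im ≠ 0 := by
    have h1 : s.re * s.re - s.im * s.im = a^2+4*b := by
      have h := congrArg Complex.re hsq''
      rwa [sq, Complex.mul_re, Complex.ofReal_re] at h
    have h2 : s.re * s.im + s.im * s.re = 0 := by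
      have h := congrArg Complex.im hsq''
      rwa [sq, Complex.mul_im, Complex.ofReal_im] at h
    have him : s.im ≠ 0 := by intro h; rw [h] at h1; nlinarith
    refine ⟨?_, him⟩
    rcases mul_eq_zero.mp (show s.re * s.im = 0 by linarith) with h3 | h3
    · exact h3
    · exact absurd h3 him
  obtain ⟨hsre, hsim⟩ := hsre
  have hs_eq : s = Complex.ofReal s.im * Complex.I := by
    apply Complex.ext <;> simp [hsre]
  have hs0 : s ≠ 0 := fun h => hsim (by rw [h]; simp)
  obtain ⟨t, ht, ht0⟩ : ∃ t : ℝ, s = Complex.ofReal t * Complex.I ∧ t ≠ 0 :=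
    ⟨s.im, hs_eq, hsim⟩
  set r1 : ℂ := (Complex.ofReal a + s)/2 with hr1
  set r2 : ℂ := (Complex.ofReal a - s)/2 with hr2
  have hroot1 : r1^2 = Complex.ofReal a * r1 + Complex.ofReal b := by
    rw [hr1]; linear_combination (1/4 : ℂ) * hsq'
  have hroot2 : r2^2 = Complex.ofReal a * r2 + Complex.ofReal b := by
    rw [hr2]; linear_combination (1/4 : ℂ) * hsq'
  have hprod : r1 * r2 = -Complex.ofReal b := by
    rw [hr1, hr2]; linear_combination (-(1/4) : ℂ) * hsq'
  have hbC : Complex.ofReal b ≠ 0 := by simpa using hb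
  have hr1ne : r1 ≠ 0 := by
    intro h; rw [h, zero_mul] at hprod
    exact hbC (by linear_combination hprod)
  have hr2ne : r2 ≠ 0 := by
    intro h; rw [h, mul_zero] at hprod
    exact hbC (by linear_combination hprod)
  have hne_aux : ∀ (x y : ℝ), y ≠ 0 → (Complex.ofReal x + Complex.ofReal y * Complex.I) ≠ 0 := by
    intro x y hy h
    have h2 := congrArg Complex.im h
    simp at h2
    exact hy h2
  have hden2 : Complex.ofReal w1 - r2 ≠ 0 := by
    rw [show Complex.ofReal w1 - r2 =
        Complex.ofReal (w1 - a/2) + Complex.ofReal (t/2) * Complex.I by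
      rw [hr2, ht]; push_cast; ring]
    exact hne_aux _ _ (by simpa using ht0)
  have hden1 : Complex.ofReal w1 - r1 ≠ 0 := by
    rw [show Complex.ofReal w1 - r1 =
        Complex.ofReal (w1 - a/2) + Complex.ofReal (-(t/2)) * Complex.I by
      rw [hr1, ht]; push_cast; ring]
    exact hne_aux _ _ (by simpa using ht0)
  set α : ℂ := (Complex.ofReal w1 - r2)/s with hαdef
  set β : ℂ := (r1 - Complex.ofReal w1)/s with hβdef
  have hsum : α + β = 1 := by
    rw [hαdef, hβdef, ← add_div, div_eq_one_iff_eq hs0, hr1, hr2]; ring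
  have hw1sum : α * r1 + β * r2 = Complex.ofReal w1 := by
    rw [hαdef, hβdef, div_mul_eq_mul_div, div_mul_eq_mul_div, ← add_div,
      div_eq_iff hs0, hr1, hr2]; ring
  have hz0 : (Complex.ofReal (w 0)) = 1 := by rw [hw0]; simp
  have hz1 : (Complex.ofReal (w 1)) = Complex.ofReal w1 := by rw [hw1]
  have hzrec : ∀ n, 2 ≤ n → (Complex.ofReal (w n) : ℂ) =
      Complex.ofReal a * Complex.ofReal (w (n-1)) + Complex.ofReal b * Complex.ofReal (w (n-2)) := by
    intro n hn
    rw [hrec n hn]; push_cast; ring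
  have hbin : ∀ n : ℕ, (Complex.ofReal (w n) : ℂ) = α * r1 ^ n + β * r2 ^ n :=
    aux_binet (Complex.ofReal a) (Complex.ofReal b) (Complex.ofReal w1) r1 r2 α β
    (fun n => Complex.ofReal (w n)) hz0 hz1 hzrec hroot1 hroot2 hsum hw1sum
  have hu_eq : u = (Complex.ofReal w1 - r1)/(Complex.ofReal w1 - r2) := by
    rw [hudef, hr1, hr2]
    congr 1 <;> ring
  have hv_eq : v = r1 / r2 := by
    rw [hvdef, hr1, hr2]
    rw [div_div_div_comm]
    norm_num
  -- conjugation facts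
  have hconj : (starRingEnd ℂ) r1 = r2 := by
    rw [hr1, hr2, ht]
    rw [show ((2:ℂ)) = ((2:ℝ):ℂ) by norm_num]
    rw [map_div₀, map_add, Complex.conj_ofReal, map_mul, Complex.conj_ofReal,
      Complex.conj_I, Complex.conj_ofReal]
    ring
  have habs_v : ‖v‖ = 1 := by
    rw [hv_eq, norm_div, ← hconj, Complex.norm_conj, div_self (norm_ne_zero_iff.mpr hr1ne)]
  have hconj2 : (starRingEnd ℂ) (Complex.ofReal w1 - r1) = Complex.ofReal w1 - r2 := by
    rw [map_sub, Complex.conj_ofReal, hconj]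
  have habs_u : ‖u‖ = 1 := by
    rw [hu_eq, norm_div, ← hconj2, Complex.norm_conj,
      div_self (norm_ne_zero_iff.mpr hden1)]
  -- the key characterization of zeros
  have hiff : ∀ n : ℕ, (w n = 0 ↔ v ^ n = u) := by
    intro n
    have hpow2 : r2 ^ n ≠ 0 := pow_ne_zero n hr2ne
    constructor
    · intro h
      have h0 : α * r1^n + β * r2^n = 0 := by
        rw [← hbin n, h, Complex.ofReal_zero]
      rw [hv_eq, hu_eq, div_pow, div_eq_div_iff hpow2 hden2]
      have e1 : Complex.ofReal w1 - r2 = α * s := by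
        rw [hαdef, div_mul_cancel₀ _ hs0]
      have e2 : Complex.ofReal w1 - r1 = -(β * s) := by
        rw [hβdef, div_mul_cancel₀ _ hs0]; ring
      rw [e1, e2]
      linear_combination s * h0
    · intro h
      rw [hv_eq, hu_eq, div_pow, div_eq_div_iff hpow2 hden2] at h
      have h0 : α * r1^n + β * r2^n = 0 := by
        rw [hαdef, hβdef, div_mul_eq_mul_div, div_mul_eq_mul_div, ← add_div,
          div_eq_zero_iff]
        left
        linear_combination h
      have hz : (Complex.ofReal (w n) : ℂ) = 0 := by rw [hbin n]; exact h0
      exact_mod_cast hz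
  constructor
  · rintro ⟨i0, j0, hij0, hi0, hj0⟩
    obtain ⟨i, j, hlt, hi, hj⟩ : ∃ i j : ℕ, i < j ∧ w i = 0 ∧ w j = 0 := by
      rcases hij0.lt_or_gt with h | h
      · exact ⟨i0, j0, h, hi0, hj0⟩
      · exact ⟨j0, i0, h, hj0, hi0⟩
    have hvi : v ^ i = u := (hiff i).mp hi
    have hvj : v ^ j = u := (hiff j).mp hj
    have hv0 : v ≠ 0 := by rw [hv_eq]; exact div_ne_zero hr1ne hr2ne
    set k : ℕ := j - i with hk
    have hkpos : 0 < k := by omega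
    have hvk : v ^ k = 1 := by
      have h1 : v ^ i * v ^ k = v ^ i * 1 := by
        rw [mul_one, ← pow_add, show i + k = j by omega, hvj, hvi]
      exact mul_left_cancel₀ (pow_ne_zero i hv0) h1
    obtain ⟨pv, qv, hpv, hgv, hargv, -⟩ := aux_arg v k hkpos hvk
    have hvpv : v ^ pv = 1 := aux_pow_one v pv qv habs_v hpv hargv
    have hupv : u ^ pv = 1 := by
      rw [← hvi, ← pow_mul, mul_comm, pow_mul, hvpv, one_pow]
    obtain ⟨pu, qu, hpu, hgu, hargu, hdvd⟩ := aux_arg u pv hpv hupv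
    exact ⟨pu, pv, qu, qv, hpu, hpv, hgu, hgv, hargu, hargv, hdvd⟩
  · rintro ⟨pu, pv, qu, qv, hpu, hpv, hgu, hgv, hargu, hargv, hdvd⟩
    have hupu : u ^ pu = 1 := aux_pow_one u pu qu habs_u hpu hargu
    have hupv : u ^ pv = 1 := by
      obtain ⟨m, hm⟩ := hdvd
      rw [hm, pow_mul, hupu, one_pow]
    obtain ⟨n, hn1, hn2⟩ := aux_gen v u pv qv hpv hgv habs_v hargv hupv
    exact ⟨n, n + pv, by omega, (hiff n).mpr hn1, (hiff (n + pv)).mpr hn2⟩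

lemma aux_pos (a b : ℝ) (w : ℕ → ℝ) (hw0 : w 0 = 1)
    (hrec : ∀ n, 2 ≤ n → w n = a * w (n-1) + b * w (n-2))
    (hb : b ≠ 0) (hd : 0 < a^2 + 4*b)
    (i j : ℕ) (hij : i ≠ j) (hi : w i = 0) (hj : w j = 0) :
    a = 0 ∧ ∀ n : ℕ, (w n = 0 ↔ Odd n) := by
  -- first, show a = 0
  have ha0 : a = 0 := by
    obtain ⟨i, j, hlt, hi, hj⟩ : ∃ i j : ℕ, i < j ∧ w i = 0 ∧ w j = 0 := by
      rcases hij.lt_or_gt with h | h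
      · exact ⟨i, j, h, hi, hj⟩
      · exact ⟨j, i, h, hj, hi⟩
    set s : ℝ := Real.sqrt (a^2 + 4*b) with hsdef
    have hspos : 0 < s := Real.sqrt_pos.mpr hd
    have hsq : s^2 = a^2 + 4*b := Real.sq_sqrt hd.le
    have hs0 : s ≠ 0 := hspos.ne'
    set r1 : ℝ := (a + s)/2 with hr1
    set r2 : ℝ := (a - s)/2 with hr2
    have hroot1 : r1^2 = a * r1 + b := by rw [hr1]; linear_combination (1/4 : ℝ) * hsq
    have hroot2 : r2^2 = a * r2 + b := by rw [hr2]; linear_combination (1/4 : ℝ) * hsq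
    have hprod : r1 * r2 = -b := by rw [hr1, hr2]; linear_combination (-(1/4) : ℝ) * hsq
    have hr1ne : r1 ≠ 0 := by
      intro h; rw [h, zero_mul] at hprod; exact hb (by linarith)
    have hr2ne : r2 ≠ 0 := by
      intro h; rw [h, mul_zero] at hprod; exact hb (by linarith)
    set α : ℝ := (w 1 - r2)/s with hαdef
    set β : ℝ := (r1 - w 1)/s with hβdef
    have hsum : α + β = 1 := by
      rw [hαdef, hβdef, ← add_div, div_eq_one_iff_eq hs0, hr1, hr2]; ring
    have hw1sum : α * r1 + β * r2 = w 1 := by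
      rw [hαdef, hβdef, div_mul_eq_mul_div, div_mul_eq_mul_div, ← add_div,
        div_eq_iff hs0, hr1, hr2]; ring
    have hbin : ∀ n : ℕ, w n = α * r1^n + β * r2^n :=
      aux_binet a b (w 1) r1 r2 α β w hw0 rfl hrec hroot1 hroot2 hsum hw1sum
    have hα0 : α ≠ 0 := by
      intro h
      have hβ1 : β = 1 := by rw [h] at hsum; linarith
      have hri : r2 ^ i = 0 := by
        have := hbin i
        rw [hi, h, hβ1] at this
        linarith
      exact hr2ne (pow_eq_zero_iff'.mp hri).1
    have hE : ∀ n : ℕ, w n = 0 → α * r1^n = -(β * r2^n) := by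
      intro n hn
      have := hbin n
      rw [hn] at this
      linarith
    have hEi := hE i hi
    have hEj := hE j hj
    set k : ℕ := j - i with hk
    have hkpos : 0 < k := by omega
    have hcancel : r1 ^ k = r2 ^ k := by
      have hne : α * r1 ^ i ≠ 0 := mul_ne_zero hα0 (pow_ne_zero i hr1ne)
      apply mul_left_cancel₀ hne
      calc α * r1^i * r1^k = α * r1^(i+k) := by rw [pow_add]; ring
        _ = α * r1^j := by rw [show i + k = j by omega]
        _ = -(β * r2^j) := hEj
        _ = -(β * (r2^i * r2^k)) := by rw [← pow_add, show i + k = j by omega]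
        _ = -(β * r2^i) * r2^k := by ring
        _ = α * r1^i * r2^k := by rw [← hEi]
    have hr12 : r1 ≠ r2 := by
      intro h
      rw [hr1, hr2] at h
      have : s = 0 := by linarith
      exact hs0 this
    have := aux_real_pow r1 r2 k hkpos hr1ne hr12 hcancel
    rw [hr1, hr2] at this
    linarith
  -- now the parity characterization
  have hstep : ∀ n : ℕ, w (n+2) = b * w n := by
    intro n
    have h := hrec (n+2) (by omega)
    have e1 : n + 2 - 1 = n + 1 := rfl
    have e2 : n + 2 - 2 = n := rfl
    rw [e1, e2, ha0, zero_mul, zero_add] at h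
    exact h
  obtain ⟨heven, hodd⟩ := aux_parity b w hw0 hstep
  have hw1 : w 1 = 0 := by
    -- one of i, j is odd
    have hodd_of_zero : ∀ n : ℕ, w n = 0 → Odd n := by
      intro n hn
      rcases Nat.even_or_odd n with ⟨m, hm⟩ | h
      · exfalso
        rw [show n = 2*m by omega, heven m] at hn
        exact pow_ne_zero m hb hn
      · exact h
    obtain ⟨m, hm⟩ := hodd_of_zero i hi
    rw [show i = 2*m+1 by omega, hodd m] at hi
    rcases mul_eq_zero.mp hi with h | h
    · exact absurd h (pow_ne_zero m hb)
    · exact h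
  refine ⟨ha0, fun n => ?_⟩
  rcases Nat.even_or_odd n with ⟨m, hm⟩ | hoddn
  · refine iff_of_false ?_ ?_
    · rw [show n = 2*m by omega, heven m]
      exact pow_ne_zero m hb
    · rw [Nat.odd_iff]; omega
  · refine iff_of_true ?_ hoddn
    obtain ⟨m, hm⟩ := hoddn
    rw [show n = 2*m+1 by omega, hodd m, hw1, mul_zero]


theorem stmt_16 (A B : Polynomial ℝ) (W : ℕ → Polynomial ℝ) (hW0 : W 0 = 1)
    (hrec : ∀ n, 2 ≤ n → W n = A * W (n - 1) + B * W (n - 2))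
    (c : ℝ) (hB : B.eval c ≠ 0) :
    (∃ i j : ℕ, i ≠ j ∧ (W i).eval c = 0 ∧ (W j).eval c = 0) ↔
      ((A.eval c ^ 2 + 4 * B.eval c > 0 ∧ A.eval c = 0 ∧
          ∀ n : ℕ, ((W n).eval c = 0 ↔ Odd n)) ∨
       (A.eval c ^ 2 + 4 * B.eval c < 0 ∧
        (let Ac : ℂ := Complex.ofReal (A.eval c);
         let Bc : ℂ := Complex.ofReal (B.eval c);
         let W1c : ℂ := Complex.ofReal ((W 1).eval c);
         let s : ℂ := (Ac ^ 2 + 4 * Bc) ^ ((1 : ℂ) / 2);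
         let v : ℂ := (Ac + s) / (Ac - s);
         let u : ℂ := ((2 * W1c - Ac - s) / 2) / ((2 * W1c - Ac + s) / 2);
         ∃ (pu pv : ℕ) (qu qv : ℤ), 0 < pu ∧ 0 < pv ∧
           Int.gcd (pu : ℤ) qu = 1 ∧ Int.gcd (pv : ℤ) qv = 1 ∧
           Complex.arg u = 2 * qu * Real.pi / pu ∧
           Complex.arg v = 2 * qv * Real.pi / pv ∧
           pu ∣ pv))) := by
  have hw0 : (W 0).eval c = 1 := by rw [hW0]; simp
  have hwrec : ∀ n, 2 ≤ n → (W n).eval c =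
      A.eval c * (W (n-1)).eval c + B.eval c * (W (n-2)).eval c := by
    intro n hn; rw [hrec n hn]; simp
  rcases lt_trichotomy (A.eval c ^ 2 + 4 * B.eval c) 0 with hd | hd | hd
  · -- d < 0
    have key := aux_neg (A.eval c) (B.eval c) ((W 1).eval c)
      (fun n => (W n).eval c) hw0 rfl hwrec hB hd
    constructor
    · intro h
      exact Or.inr ⟨hd, key.mp h⟩
    · rintro (⟨hd', -, -⟩ | ⟨-, hlet⟩)
      · linarith
      · exact key.mpr hlet
  · -- d = 0
    constructor
    · rintro ⟨i, j, hij, hi, hj⟩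
      exact absurd (aux_deg (A.eval c) (B.eval c) (fun n => (W n).eval c)
        hw0 hwrec hB hd i j hij hi hj) not_false
    · rintro (⟨hd', -, -⟩ | ⟨hd', -⟩) <;> linarith
  · -- d > 0
    constructor
    · rintro ⟨i, j, hij, hi, hj⟩
      obtain ⟨ha0, hiffn⟩ := aux_pos (A.eval c) (B.eval c) (fun n => (W n).eval c)
        hw0 hwrec hB hd i j hij hi hj
      exact Or.inl ⟨hd, ha0, hiffn⟩
    · rintro (⟨-, -, hiffn⟩ | ⟨hd', -⟩)
      · exact ⟨1, 3, by norm_num, (hiffn 1).mpr (by decide), (hiffn 3).mpr (by decide)⟩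
      · linarith
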